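/- arXiv:2512.08041 — 4 statements merged into one kernel-verified Lean document; each statement's English description precedes it below -/
import Mathlib

section
/- Let q ∈ ℝ with q ≠ 0, q ≠ ±1, and [n] = (q^(2n)−1)/(q²−1). Define λ_k = −((q^(−2k) + q⁴)·[k] + q^(−2k+2)·(1+q²)·[k]²) for k ∈ ℕ. Then the map k ↦ λ_k is injective on ℕ; in particular λ_k ≠ λ_j for k ≠ j. -/
/-- The q-integer `[n] = (q^(2n) - 1)/(q^2 - 1)` (base `q²`). -/
noncomputable def qint (q : ℝ) (n : ℕ) : ℝ := (q ^ (2 * n) - 1) / (q ^ 2 - 1)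

lemma lam_eq (q : ℝ) (hq0 : q ≠ 0) (h1 : q ^ 2 - 1 ≠ 0) (k : ℕ) :
    -((q ^ (-2 * (k : ℤ)) + q ^ 4) * qint q k
        + q ^ (-2 * (k : ℤ) + 2) * (1 + q ^ 2) * (qint q k) ^ 2)
    = -((q ^ 4 + 1) / (q ^ 2 - 1) ^ 2)
        * ((q ^ 2) ^ (k + 1) + ((q ^ 2) ^ k)⁻¹ - (q ^ 2 + 1)) := by
  have hzk : q ^ (-2 * (k : ℤ)) = ((q ^ 2) ^ k)⁻¹ := by
    rw [show (-2 * (k : ℤ)) = -(2 * k : ℕ) by push_cast; ring, zpow_neg, zpow_natCast, pow_mul]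
  have hzk2 : q ^ (-2 * (k : ℤ) + 2) = ((q ^ 2) ^ k)⁻¹ * q ^ 2 := by
    rw [zpow_add₀ hq0, hzk]
    rw [show (2:ℤ) = ((2:ℕ):ℤ) from rfl, zpow_natCast]
  have hp : (q ^ 2) ^ k ≠ 0 := pow_ne_zero _ (pow_ne_zero _ hq0)
  rw [hzk, hzk2]
  unfold qint
  rw [pow_mul]
  field_simp
  ring

lemma g_mono (t : ℝ) (ht : 0 < t) (htne : t ≠ 1) :
    StrictMono (fun k : ℕ => t ^ (k + 1) + (t ^ k)⁻¹) := by
  apply strictMono_nat_of_lt_succ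
  intro k
  have hp1 : (0 : ℝ) < t ^ (k + 1) := pow_pos ht _
  have hpow : t ^ (k + 1) = t * t ^ k := by ring
  have hpow2 : t ^ (k + 1 + 1) = t * t ^ (k + 1) := by ring
  have hbc : t * (t ^ (k + 1))⁻¹ = (t ^ k)⁻¹ := by
    rw [hpow, mul_inv, ← mul_assoc, mul_inv_cancel₀ ht.ne', one_mul]
  rcases lt_or_gt_of_ne htne with hlt | hgt
  · have h1 : t ^ (k + 1) < 1 := pow_lt_one₀ ht.le hlt (Nat.succ_ne_zero k)
    have h2 : 1 < (t ^ (k + 1))⁻¹ := ((one_lt_inv₀ hp1).2 h1)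
    nlinarith [mul_pos (sub_pos.2 hlt) (sub_pos.2 (h1.trans h2))]
  · have h1 : 1 < t ^ (k + 1) := one_lt_pow₀ hgt (Nat.succ_ne_zero k)
    have h2 : (t ^ (k + 1))⁻¹ < 1 := (inv_lt_one_of_one_lt₀ h1)
    nlinarith [mul_pos (sub_pos.2 hgt) (sub_pos.2 (h2.trans h1))]

/-- The eigenvalue sequence `λ_k = −((q^(−2k)+q⁴)[k] + q^(−2k+2)(1+q²)[k]²)` of the left
quantum Laplacian on `γ^k γ^{*k}` is injective in `k`. -/
theorem stmt_5 (q : ℝ) (hq0 : q ≠ 0) (hq1 : q ≠ 1) (hqm1 : q ≠ -1) :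
    Function.Injective (fun k : ℕ =>
      -((q ^ (-2 * (k : ℤ)) + q ^ 4) * qint q k
        + q ^ (-2 * (k : ℤ) + 2) * (1 + q ^ 2) * (qint q k) ^ 2)) := by
  have h1 : q ^ 2 - 1 ≠ 0 := by
    intro h
    have : (q - 1) * (q + 1) = 0 := by ring_nf; linarith [h]
    rcases mul_eq_zero.1 this with h' | h'
    · exact hq1 (by linarith)
    · exact hqm1 (by linarith)
  have ht : 0 < q ^ 2 := by positivity
  have htne : q ^ 2 ≠ 1 := fun h => h1 (by linarith)
  have hC : -((q ^ 4 + 1) / (q ^ 2 - 1) ^ 2) < 0 := by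
    have : (0:ℝ) < (q ^ 2 - 1) ^ 2 := by positivity
    have : (0:ℝ) < (q ^ 4 + 1) / (q ^ 2 - 1) ^ 2 := by positivity
    linarith
  have key : StrictAnti (fun k : ℕ =>
      -((q ^ (-2 * (k : ℤ)) + q ^ 4) * qint q k
        + q ^ (-2 * (k : ℤ) + 2) * (1 + q ^ 2) * (qint q k) ^ 2)) := by
    intro a b hab
    simp only [lam_eq q hq0 h1]
    have := g_mono (q ^ 2) ht htne hab
    simp only at this
    nlinarith [this]
  exact key.injective
end

section
/- Let q ∈ ℝ with q ≠ 0, q ≠ ±1, n ∈ ℕ with n ≥ 1, and [m] = (q^(2m)−1)/(q²−1). Define b₁ = −([n+1] + q^(2n+2) + q⁴(1+q²)[n] + q^(4+2n)(1+q²)), b₂ = −q^(−2+2n)(1+q⁴), b₃ = −q⁴[n], c₁ = −q^(−2n)((1+q²)[n] + q^(−2)(1+q²) + q⁴[n+1] + q²), c₂ = −q^(−2)(1+q⁴), c₃ = −q^(−2n)[n]. Then b₁c₂ + b₂c₃ − b₂c₁ − b₃c₂ ≠ 0. -/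
lemma qint_eq_sum (q : ℝ) (hq : q ^ 2 ≠ 1) (m : ℕ) :
    qint q m = ∑ i ∈ Finset.range m, (q ^ 2) ^ i := by
  rw [geom_sum_eq hq, qint, pow_mul]

lemma key_pos (q : ℝ) (hq0 : q ≠ 0) (hq : q ^ 2 ≠ 1) (n : ℕ) (hn : 1 ≤ n) :
    0 < (q ^ 4 + q ^ 2 + 1) * qint q (n + 2) - q ^ 4 - q ^ 2 := by
  have hS : (1 : ℝ) + q ^ 2 + (q ^ 2) ^ 2 ≤ qint q (n + 2) := by
    rw [qint_eq_sum q hq]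
    have h3 : ∑ i ∈ Finset.range 3, (q ^ 2) ^ i = 1 + q ^ 2 + (q ^ 2) ^ 2 := by
      simp [Finset.sum_range_succ]
    rw [← h3]
    apply Finset.sum_le_sum_of_subset_of_nonneg
    · exact Finset.range_subset_range.mpr (by omega)
    · intro i _ _; positivity
  have hq2 : 0 < q ^ 2 := by positivity
  nlinarith [sq_nonneg (q ^ 2), sq_nonneg (q ^ 4), hS, hq2, sq_nonneg q]

/-- Non-vanishing of the commutator coefficient of the two quantum gauge Laplacians on the
invariant subspace spanned by `αⁿγγ*` and `αⁿ`. -/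
theorem stmt_8 (q : ℝ) (hq0 : q ≠ 0) (hq1 : q ≠ 1) (hqm1 : q ≠ -1)
    (n : ℕ) (hn : 1 ≤ n) :
    let b1 : ℝ := -(qint q (n + 1) + q ^ (2 * (n : ℤ) + 2) + q ^ 4 * (1 + q ^ 2) * qint q n
      + q ^ (4 + 2 * (n : ℤ)) * (1 + q ^ 2))
    let b2 : ℝ := -(q ^ (-2 + 2 * (n : ℤ)) * (1 + q ^ 4))
    let b3 : ℝ := -(q ^ 4 * qint q n)
    let c1 : ℝ := -(q ^ (-2 * (n : ℤ)) * ((1 + q ^ 2) * qint q n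
      + q ^ (-2 : ℤ) * (1 + q ^ 2) + q ^ 4 * qint q (n + 1) + q ^ 2))
    let c2 : ℝ := -(q ^ (-2 : ℤ) * (1 + q ^ 4))
    let c3 : ℝ := -(q ^ (-2 * (n : ℤ)) * qint q n)
    b1 * c2 + b2 * c3 - b2 * c1 - b3 * c2 ≠ 0 := by
  intro b1 b2 b3 c1 c2 c3
  have hq2ne : q ^ 2 ≠ 1 := by
    intro h
    have h2 : (q - 1) * (q + 1) = 0 := by nlinarith
    rcases mul_eq_zero.mp h2 with h3 | h3
    · exact hq1 (by linarith)
    · exact hqm1 (by linarith)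
  have hd : q ^ 2 - 1 ≠ 0 := sub_ne_zero.mpr hq2ne
  have hs : q ^ (2 * n) ≠ 0 := pow_ne_zero _ hq0
  -- rewrite all zpows in terms of s := q^(2n) and q^2
  set s : ℝ := q ^ (2 * n) with hs_def
  have e1 : (q : ℝ) ^ (2 * (n : ℤ) + 2) = s * q ^ 2 := by
    rw [show 2 * (n : ℤ) + 2 = ((2 * n + 2 : ℕ) : ℤ) by push_cast; ring, zpow_natCast,
      pow_add, hs_def]
  have e2 : (q : ℝ) ^ (-2 + 2 * (n : ℤ)) = s / q ^ 2 := by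
    rw [show -2 + 2 * (n : ℤ) = ((2 * n : ℕ) : ℤ) - ((2 : ℕ) : ℤ) by push_cast; ring,
      zpow_sub₀ hq0, zpow_natCast, zpow_natCast, hs_def]
  have e3 : (q : ℝ) ^ (-2 * (n : ℤ)) = s⁻¹ := by
    rw [show -2 * (n : ℤ) = -((2 * n : ℕ) : ℤ) by push_cast; ring, zpow_neg, zpow_natCast,
      hs_def]
  have e4 : (q : ℝ) ^ (-2 : ℤ) = (q ^ 2)⁻¹ := by
    rw [show (-2 : ℤ) = -((2 : ℕ) : ℤ) from rfl, zpow_neg, zpow_natCast]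
  have e5 : (q : ℝ) ^ (4 + 2 * (n : ℤ)) = q ^ 4 * s := by
    rw [show 4 + 2 * (n : ℤ) = ((2 * n + 4 : ℕ) : ℤ) by push_cast; ring, zpow_natCast,
      pow_add, hs_def, mul_comm]
  have hq_n : qint q n = (s - 1) / (q ^ 2 - 1) := by rw [qint, hs_def]
  have hq_n1 : qint q (n + 1) = (s * q ^ 2 - 1) / (q ^ 2 - 1) := by
    rw [qint, show 2 * (n + 1) = 2 * n + 2 by ring, pow_add, hs_def]
  have hq_n2 : qint q (n + 2) = (s * q ^ 4 - 1) / (q ^ 2 - 1) := by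
    rw [qint, show 2 * (n + 2) = 2 * n + 4 by ring, pow_add, hs_def]
  have key : b1 * c2 + b2 * c3 - b2 * c1 - b3 * c2 =
      (q ^ 4 + 1) * (q ^ 2 - 1) *
        ((q ^ 4 + q ^ 2 + 1) * qint q (n + 2) - q ^ 4 - q ^ 2) / q ^ 4 := by
    simp only [b1, b2, b3, c1, c2, c3, hq_n, hq_n1, hq_n2, e1, e2, e3, e4, e5]
    field_simp
    ring
  rw [key]
  have hK := key_pos q hq0 hq2ne n hn
  have h41 : (q : ℝ) ^ 4 + 1 > 0 := by positivity
  have h4 : (q : ℝ) ^ 4 ≠ 0 := by positivity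
  exact div_ne_zero (mul_ne_zero (mul_ne_zero (ne_of_gt h41) hd) (ne_of_gt hK)) h4
end

section
/- Let G = ℂ[z, z⁻¹] be the *-Hopf algebra of Laurent polynomials with Δ(z) = z⊗z, ε(z) = 1, S(z) = z*, z* = z⁻¹, and let q ∈ ℝ, q ≠ 0, ±1. Let R' ⊆ Ker(ε) be the right ideal generated by q²z + z* − (1+q²)·1. Then in the quotient u_q(1)# := Ker(ε)/R', with π'(g) denoting the class of g − ε(g)·1, one has q²π'(z^{n+1}) + π'(z^{n−1}) − (1+q²)π'(z^n) = 0 for all n ∈ ℤ, the quotient u_q(1)# is one-dimensional spanned by π'(z), and π'(z*) = −q²π'(z). -/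
/-- The group-like element `z^n` in the Laurent polynomial algebra `ℂ[z,z⁻¹]`,
realized as `AddMonoidAlgebra ℂ ℤ`. -/
noncomputable def zn (n : ℤ) : AddMonoidAlgebra ℂ ℤ := AddMonoidAlgebra.single n 1

/-- The counit `ε` of `ℂ[z,z⁻¹]` (sum of coefficients, i.e. evaluation at `z = 1`). -/
noncomputable def counitL (p : AddMonoidAlgebra ℂ ℤ) : ℂ := Finsupp.sum p.coeff fun _ c => c

lemma zn_mul (a b : ℤ) : zn a * zn b = zn (a + b) := by
  rw [zn, zn, zn, AddMonoidAlgebra.single_mul_single, one_mul]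

lemma zn_zero : zn 0 = 1 := rfl

/-- The coefficient `λ_n` with `π'(z^n) = λ_n π'(z)`, where `s = q⁻²`. -/
noncomputable def Lc (s : ℂ) (n : ℤ) : ℂ := (1 - s ^ n) / (1 - s)

lemma Lc_rec (s : ℂ) (hs0 : s ≠ 0) (n : ℤ) :
    s⁻¹ * Lc s (n+1) + Lc s (n-1) - (1 + s⁻¹) * Lc s n = 0 := by
  unfold Lc
  rcases eq_or_ne s 1 with h | h
  · simp [h]
  · have h1 : (1:ℂ) - s ≠ 0 := sub_ne_zero.mpr (Ne.symm h)
    rw [zpow_add₀ hs0, zpow_sub₀ hs0]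
    field_simp
    ring

lemma Lc_zero (s : ℂ) : Lc s 0 = 0 := by simp [Lc]

lemma Lc_one (s : ℂ) (hs1 : s ≠ 1) : Lc s 1 = 1 := by
  have h1 : (1:ℂ) - s ≠ 0 := sub_ne_zero.mpr (Ne.symm hs1)
  simp [Lc, div_self h1]

/-- Evaluation of a Laurent polynomial at an invertible complex number. -/
noncomputable def ev (t : ℂˣ) : AddMonoidAlgebra ℂ ℤ →ₐ[ℂ] ℂ :=
  AddMonoidAlgebra.lift ℂ ℂ ℤ ((Units.coeHom ℂ).comp (zpowersHom ℂˣ t))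

lemma ev_zn (t : ℂˣ) (n : ℤ) : ev t (zn n) = (t : ℂ) ^ n := by
  rw [ev, zn, AddMonoidAlgebra.lift_single]
  simp [zpowersHom]

set_option maxHeartbeats 1000000 in
/-- The quotient `u_q(1)# = Ker(ε)/R'` with `R'` generated by `q²z + z⁻¹ − (1+q²)`:
the recursion `q²π'(z^{n+1}) + π'(z^{n−1}) − (1+q²)π'(z^n) = 0` holds, the quotient is
one-dimensional, spanned by `π'(z)`, and `π'(z*) = −q²π'(z)`.  Here `π'(g)` is the class of
`g − ε(g)·1`, so all assertions are phrased as membership of representatives in `R'`. -/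
theorem stmt_11 (q : ℝ) (hq0 : q ≠ 0) (hq1 : q ≠ 1) (hqm1 : q ≠ -1) :
    let R' : Ideal (AddMonoidAlgebra ℂ ℤ) :=
      Ideal.span {((q : ℂ) ^ 2) • zn 1 + zn (-1) - ((1 : ℂ) + (q : ℂ) ^ 2) • (1 : AddMonoidAlgebra ℂ ℤ)}
    (∀ n : ℤ, ((q : ℂ) ^ 2) • (zn (n + 1) - 1) + (zn (n - 1) - 1)
        - ((1 : ℂ) + (q : ℂ) ^ 2) • (zn n - 1) ∈ R') ∧
      (∀ g : AddMonoidAlgebra ℂ ℤ, counitL g = 0 → ∃ c : ℂ, g - c • (zn 1 - 1) ∈ R') ∧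
      zn 1 - 1 ∉ R' ∧
      (zn (-1) - 1) + ((q : ℂ) ^ 2) • (zn 1 - 1) ∈ R' := by
  intro R'
  set r : ℂ := (q : ℂ) ^ 2 with hr
  have hr0 : r ≠ 0 := pow_ne_zero _ (by exact_mod_cast hq0)
  have hr1 : r ≠ 1 := by
    intro h
    rw [hr] at h
    have h' : (q : ℝ) ^ 2 = 1 := by exact_mod_cast h
    have : (q - 1) * (q + 1) = 0 := by nlinarith
    rcases mul_eq_zero.mp this with h | h
    · exact hq1 (by linarith)
    · exact hqm1 (by linarith)
  set s : ℂ := r⁻¹ with hs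
  have hs0 : s ≠ 0 := inv_ne_zero hr0
  have hs1 : s ≠ 1 := fun h => hr1 (by rw [← inv_inv r, ← hs, h, inv_one])
  have hsr : s⁻¹ = r := inv_inv r
  set g₀ : AddMonoidAlgebra ℂ ℤ := r • zn 1 + zn (-1) - ((1:ℂ) + r) • 1 with hg₀
  have hR' : R' = Ideal.span {g₀} := rfl
  have hrec : ∀ n : ℤ, r * Lc s (n+1) + Lc s (n-1) - (1 + r) * Lc s n = 0 := by
    intro n
    have := Lc_rec s hs0 n
    rwa [hsr] at this
  -- Part 1: the recursion elements lie in R'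
  have key : ∀ n : ℤ, r • (zn (n + 1) - 1) + (zn (n - 1) - 1) - ((1:ℂ) + r) • (zn n - 1)
      = zn n * g₀ := by
    intro n
    have hz : zn (n + -1) = zn (n - 1) := by rw [← sub_eq_add_neg]
    rw [hg₀, mul_sub, mul_add, mul_smul_comm, mul_smul_comm, zn_mul, zn_mul, mul_one, hz]
    module
  have part1 : ∀ n : ℤ, r • (zn (n + 1) - 1) + (zn (n - 1) - 1) - ((1:ℂ) + r) • (zn n - 1) ∈ R' := by
    intro n
    rw [key n, hR']
    exact Ideal.mem_span_singleton.mpr (dvd_mul_left g₀ (zn n))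
  -- the one-dimensionality: every π'(z^n) is a multiple of π'(z)
  set w : AddMonoidAlgebra ℂ ℤ := zn 1 - 1 with hw
  set P : ℤ → Prop := fun n => zn n - 1 - Lc s n • w ∈ R' with hP
  have P0 : P 0 := by
    simp only [hP, zn_zero, Lc_zero, sub_self, zero_smul, sub_zero]
    exact R'.zero_mem
  have P1 : P 1 := by
    simp only [hP, Lc_one s hs1, one_smul, ← hw, sub_self]
    exact R'.zero_mem
  have step_up : ∀ n : ℤ, P (n - 1) → P n → P (n + 1) := by
    intro n h1 h2
    have hx : r • (zn (n+1) - 1 - Lc s (n+1) • w)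
        = (r • (zn (n + 1) - 1) + (zn (n - 1) - 1) - ((1:ℂ) + r) • (zn n - 1))
          - (zn (n-1) - 1 - Lc s (n-1) • w) + ((1:ℂ) + r) • (zn n - 1 - Lc s n • w)
          + (-(r * Lc s (n+1) + Lc s (n-1) - (1 + r) * Lc s n)) • w := by
      module
    have hmem : r • (zn (n+1) - 1 - Lc s (n+1) • w) ∈ R' := by
      rw [hx, hrec n, neg_zero, zero_smul, add_zero]
      exact Submodule.add_mem _ (Submodule.sub_mem _ (part1 n) h1)
        (Submodule.smul_of_tower_mem _ _ h2)
    have := Submodule.smul_of_tower_mem R' r⁻¹ hmem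
    rwa [smul_smul, inv_mul_cancel₀ hr0, one_smul] at this
  have step_down : ∀ n : ℤ, P n → P (n + 1) → P (n - 1) := by
    intro n h2 h3
    have hx : (zn (n-1) - 1 - Lc s (n-1) • w)
        = (r • (zn (n + 1) - 1) + (zn (n - 1) - 1) - ((1:ℂ) + r) • (zn n - 1))
          - r • (zn (n+1) - 1 - Lc s (n+1) • w) + ((1:ℂ) + r) • (zn n - 1 - Lc s n • w)
          + (-(r * Lc s (n+1) + Lc s (n-1) - (1 + r) * Lc s n)) • w := by
      module
    show zn (n - 1) - 1 - Lc s (n - 1) • w ∈ R'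
    rw [hx, hrec n, neg_zero, zero_smul, add_zero]
    exact Submodule.add_mem _ (Submodule.sub_mem _ (part1 n)
      (Submodule.smul_of_tower_mem _ _ h3)) (Submodule.smul_of_tower_mem _ _ h2)
  have Pall : ∀ n : ℤ, P n := by
    have pair : ∀ n : ℤ, P n ∧ P (n + 1) := by
      intro n
      induction n using Int.induction_on with
      | zero => exact ⟨P0, P1⟩
      | succ i ih =>
        refine ⟨ih.2, ?_⟩
        apply step_up ((i : ℤ) + 1) ?_ ih.2
        have : ((i : ℤ) + 1 - 1) = (i : ℤ) := by ring
        rw [this]; exact ih.1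
      | pred i ih =>
        refine ⟨?_, ?_⟩
        · exact step_down (-(i : ℤ)) ih.1 ih.2
        · have : (-(i : ℤ) - 1 + 1) = -(i : ℤ) := by ring
          rw [this]; exact ih.1
    exact fun n => (pair n).1
  refine ⟨part1, ?_, ?_, ?_⟩
  -- Part 2: one-dimensionality
  · intro g hg
    refine ⟨∑ n ∈ g.coeff.support, g.coeff n * Lc s n, ?_⟩
    have hcount : ∑ n ∈ g.coeff.support, g.coeff n = 0 := hg
    have hgdecomp : g = ∑ n ∈ g.coeff.support, (g.coeff n) • zn n := by
      conv_lhs => rw [← AddMonoidAlgebra.sum_coeff_single g]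
      rw [Finsupp.sum]
      refine Finset.sum_congr rfl fun n _ => ?_
      rw [zn, AddMonoidAlgebra.smul_single', mul_one]
    have key2 : ∑ n ∈ g.coeff.support, (g.coeff n) • (zn n - 1 - Lc s n • w)
        = g - (∑ n ∈ g.coeff.support, g.coeff n * Lc s n) • w := by
      have expand : ∀ n : ℤ, (g.coeff n) • (zn n - 1 - Lc s n • w)
          = (g.coeff n) • zn n - (g.coeff n) • (1 : AddMonoidAlgebra ℂ ℤ) - (g.coeff n * Lc s n) • w := by
        intro n
        rw [mul_smul]
        module
      rw [Finset.sum_congr rfl fun n _ => expand n, Finset.sum_sub_distrib,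
        Finset.sum_sub_distrib, ← Finset.sum_smul, ← Finset.sum_smul, hcount, zero_smul,
        sub_zero, ← hgdecomp]
    rw [← key2]
    exact Submodule.sum_mem _ fun n _ => Submodule.smul_of_tower_mem _ _ (Pall n)
  -- Part 3: π'(z) ≠ 0
  · intro hmem
    rw [hR', Ideal.mem_span_singleton] at hmem
    obtain ⟨h, hh⟩ := hmem
    set t : ℂˣ := Units.mk0 s hs0 with ht
    have h1 : ev t w = s - 1 := by
      rw [hw, map_sub, ev_zn, map_one, ht, Units.val_mk0, zpow_one]
    have h2 : ev t g₀ = 0 := by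
      rw [hg₀, map_sub, map_add, map_smul, map_smul, ev_zn, ev_zn, map_one, ht, Units.val_mk0,
        zpow_one, zpow_neg, zpow_one, hs]
      field_simp
      simp only [smul_eq_mul, mul_one_div_cancel hr0]; ring
    have : ev t w = 0 := by rw [hh, map_mul, h2, zero_mul]
    rw [h1, sub_eq_zero] at this
    exact hs1 this
  -- Part 4: π'(z*) = -q² π'(z)
  · have : (zn (-1) - 1) + r • (zn 1 - 1) = g₀ := by
      rw [hg₀]; module
    rw [this, hR']
    exact Ideal.subset_span rfl
end

section
/- Let q ∈ ℝ, q ≠ 0, ±1, and n ∈ ℕ. In SU_q(1,1), the product α^{*n}·α^n equals a polynomial in ρ = γγ* of the form 1 + f₁ρ + f₂ρ² + ⋯ + f_nρⁿ for some coefficients f_i ∈ ℝ (polynomials in q), with constant term 1. Consequently the n+1 elements α^{*n}α^n, γ*α^{*(n−1)}α^{n−1}γ, …, γ^{*n}γ^n, expressed as polynomials in ρ, form an upper-triangular system with units on the diagonal, hence there exist unique scalars r₁,…,r_n with α^{*n}α^n + r₁·γ*α^{*(n−1)}α^{n−1}γ + ⋯ + r_n·γ^{*n}γ^n = 1. -/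
noncomputable def auxP (q : ℝ) : ℕ → Polynomial ℝ :=
  fun m => ∏ k ∈ Finset.range m, (1 + Polynomial.C ((q ^ (2 * k))⁻¹) * Polynomial.X)

lemma auxP_succ (q : ℝ) (m : ℕ) :
    auxP q (m + 1) = auxP q m * (1 + Polynomial.C ((q ^ (2 * m))⁻¹) * Polynomial.X) := by
  simp [auxP, Finset.prod_range_succ]

lemma auxP_coeff_zero (q : ℝ) (m : ℕ) : (auxP q m).coeff 0 = 1 := by
  induction m with
  | zero => simp [auxP]
  | succ m ih => rw [auxP_succ, Polynomial.mul_coeff_zero, ih]; simp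

lemma auxP_natDegree_le (q : ℝ) (m : ℕ) : (auxP q m).natDegree ≤ m := by
  refine le_trans (Polynomial.natDegree_prod_le _ _) ?_
  refine le_trans (Finset.sum_le_sum (fun k _ => ?_)) (by simp : ∑ _k ∈ Finset.range m, 1 ≤ m)
  refine Polynomial.natDegree_add_le_of_degree_le (by simp) ?_
  exact le_trans (Polynomial.natDegree_C_mul_le _ _) (by simp)

lemma aux_val {A : Type*} [Ring A] [Algebra ℝ A] (q : ℝ) (hq0 : q ≠ 0) (s a ρ : A)
    (hsa : s * a = 1 + ρ) (haρ : a * ρ = (q ^ 2) • (ρ * a)) (m : ℕ) :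
    s ^ m * a ^ m = Polynomial.aeval ρ (auxP q m) := by
  have hpowρ : ∀ k : ℕ, a ^ k * ρ = (q ^ (2 * k)) • (ρ * a ^ k) := by
    intro k
    induction k with
    | zero => simp
    | succ k ih =>
      rw [pow_succ' a k, mul_assoc, ih, mul_smul_comm, ← mul_assoc, haρ,
        smul_mul_assoc, smul_smul, mul_assoc, ← pow_add]
      ring_nf
  have hρpow : ∀ k : ℕ, ρ * a ^ k = (q ^ (2 * k))⁻¹ • (a ^ k * ρ) := by
    intro k
    rw [hpowρ k, inv_smul_smul₀ (pow_ne_zero _ hq0)]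
  induction m with
  | zero => simp [auxP]
  | succ m ih =>
    have lhs : s ^ (m + 1) * a ^ (m + 1)
        = s ^ m * a ^ m + (q ^ (2 * m))⁻¹ • (s ^ m * a ^ m * ρ) := by
      rw [pow_succ s m, pow_succ' a m, mul_assoc, ← mul_assoc s a, hsa, add_mul, one_mul,
        mul_add, hρpow m, mul_smul_comm, ← mul_assoc, mul_assoc (s ^ m)]
    rw [lhs, ih, auxP_succ, map_mul, map_add, map_one, map_mul, Polynomial.aeval_C,
      Polynomial.aeval_X, mul_add, mul_one, ← Algebra.smul_def, mul_smul_comm]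

lemma aux_aeval_inj {A : Type*} [Ring A] [Algebra ℝ A] {ρ : A}
    (h : LinearIndependent ℝ fun i : ℕ => ρ ^ i) :
    Function.Injective (fun P : Polynomial ℝ => Polynomial.aeval ρ P) := by
  have key : ∀ R : Polynomial ℝ, Polynomial.aeval ρ R = 0 → R = 0 := by
    intro R hR
    have hcomb : Finsupp.linearCombination ℝ (fun i : ℕ => ρ ^ i) R.toFinsupp.coeff = 0 := by
      rw [Finsupp.linearCombination_apply, ← hR, Polynomial.aeval_def,
        Polynomial.eval₂_eq_sum, Polynomial.sum_def, Finsupp.sum]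
      refine Finset.sum_congr rfl fun i _ => ?_
      rw [Algebra.smul_def]
      rfl
    have h2 := linearIndependent_iff.mp h R.toFinsupp.coeff hcomb
    ext k
    have hk := Finsupp.ext_iff.mp h2 k
    simpa [Polynomial.coeff] using hk
  intro P Q hPQ
  have := key (P - Q) (by simp only [map_sub]; rw [sub_eq_zero]; exact hPQ)
  exact sub_eq_zero.mp this

lemma aux_tri_solve (n : ℕ) (M : Fin n → Fin n → ℝ)
    (hdiag : ∀ i, M i i = 1) (hup : ∀ i j : Fin n, (i:ℕ) < (j:ℕ) → M i j = 0)
    (b : Fin n → ℝ) :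
    ∃! r : Fin n → ℝ, ∀ i, ∑ j, M i j * r j = b i := by
  set L : (Fin n → ℝ) →ₗ[ℝ] (Fin n → ℝ) := Matrix.mulVecLin (Matrix.of M) with hLdef
  have hL : ∀ r i, L r i = ∑ j, M i j * r j := by
    intro r i
    simp [hLdef, Matrix.mulVecLin, Matrix.mulVec, dotProduct]
  have hinj : Function.Injective L := by
    rw [← LinearMap.ker_eq_bot, LinearMap.ker_eq_bot']
    intro r hr
    have hz : ∀ k : ℕ, ∀ i : Fin n, (i : ℕ) = k → r i = 0 := by
      intro k
      induction k using Nat.strong_induction_on with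
      | _ k IH =>
        intro i hik
        have h0 : ∑ j, M i j * r j = 0 := by
          have h' := congrFun hr i
          rw [hL] at h'
          simpa using h'
        have hterm : ∀ j : Fin n, M i j * r j = if j = i then r i else 0 := by
          intro j
          rcases lt_trichotomy (j : ℕ) (i : ℕ) with hlt | heq | hgt
          · rw [IH (j : ℕ) (by omega) j rfl, if_neg (by intro hji; subst hji; omega)]
            ring
          · have : j = i := Fin.ext heq
            subst this
            rw [hdiag, if_pos rfl, one_mul]
          · rw [hup i j hgt, if_neg (by intro hji; subst hji; omega), zero_mul]
        rw [Finset.sum_congr rfl fun j _ => hterm j] at h0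
        simpa using h0
    funext i
    exact hz (i : ℕ) i rfl
  have hsurj : Function.Surjective L := LinearMap.injective_iff_surjective.mp hinj
  obtain ⟨r, hr⟩ := hsurj b
  refine ⟨r, fun i => by rw [← hL, hr], fun r' hr' => hinj ?_⟩
  rw [hr]
  funext i
  rw [hL]
  exact hr' i

/-- In `SU_q(1,1)`, `α^{*n}α^n` is a polynomial in `ρ = γγ*` with constant term `1`, and by
triangular inversion there are unique scalars `r₁,…,r_n` with
`α^{*n}α^n + Σ_j r_j · γ^{*j}α^{*(n−j)}α^{n−j}γ^j = 1`.  (The powers of `ρ` are linearly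
independent in `SU_q(1,1)`, which is recorded as a hypothesis.) -/
theorem stmt_16 (q : ℝ) (hq0 : q ≠ 0) (hq1 : q ≠ 1) (hqm1 : q ≠ -1) (n : ℕ)
    (A : Type*) [Ring A] [StarRing A] [Algebra ℝ A] [StarModule ℝ A]
    (a g : A)
    (h1 : star a * a - star g * g = 1)
    (h2 : a * star a - (q ^ 2) • (g * star g) = 1)
    (h3 : g * star g = star g * g)
    (h4 : q • (g * a) = a * g)
    (h5 : q • (star g * a) = a * star g)
    (hindep : LinearIndependent ℝ fun i : ℕ => (g * star g) ^ i) :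
    (∃ f : Fin n → ℝ,
        (star a) ^ n * a ^ n = 1 + ∑ i : Fin n, f i • (g * star g) ^ ((i : ℕ) + 1)) ∧
      (∃! r : Fin n → ℝ,
        (star a) ^ n * a ^ n
          + ∑ i : Fin n, r i •
              ((star g) ^ ((i : ℕ) + 1)
                * ((star a) ^ (n - ((i : ℕ) + 1)) * a ^ (n - ((i : ℕ) + 1)))
                * g ^ ((i : ℕ) + 1)) = 1) := by
  have hsgg : star g * g = g * star g := h3.symm
  have hsaa : star a * a = 1 + g * star g := by
    have h := sub_eq_iff_eq_add.mp h1
    rw [h, hsgg]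
  have haρ : a * (g * star g) = (q ^ 2) • ((g * star g) * a) := by
    calc a * (g * star g) = (a * g) * star g := (mul_assoc _ _ _).symm
      _ = (q • (g * a)) * star g := by rw [← h4]
      _ = q • (g * (a * star g)) := by rw [smul_mul_assoc, mul_assoc]
      _ = q • (g * (q • (star g * a))) := by rw [h5]
      _ = (q ^ 2) • ((g * star g) * a) := by
          rw [mul_smul_comm, smul_smul, ← mul_assoc, sq]
  have hval : ∀ m, (star a) ^ m * a ^ m = Polynomial.aeval (g * star g) (auxP q m) :=
    fun m => aux_val q hq0 (star a) a (g * star g) hsaa haρ m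
  have hinj := aux_aeval_inj (A := A) (ρ := g * star g) hindep
  constructor
  · refine ⟨fun i => (auxP q n).coeff ((i : ℕ) + 1), ?_⟩
    rw [hval n, Polynomial.aeval_eq_sum_range'
      (lt_of_le_of_lt (auxP_natDegree_le q n) (Nat.lt_succ_self n)) (g * star g),
      Finset.sum_range_succ']
    rw [auxP_coeff_zero, pow_zero, one_smul, add_comm]
    congr 1
    rw [Fin.sum_univ_eq_sum_range (fun i => (auxP q n).coeff (i + 1) • (g * star g) ^ (i + 1)) n]
  · -- part 2
    have hgρ : Commute g (g * star g) := by
      show g * (g * star g) = (g * star g) * g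
      conv_lhs => rw [h3]
      rw [← mul_assoc]
    have hsgρ : Commute (star g) (g * star g) := by
      show star g * (g * star g) = (g * star g) * star g
      rw [← mul_assoc, ← h3]
    have hpoly : ∀ Q : Polynomial ℝ, Commute (star g) (Polynomial.aeval (g * star g) Q) := by
      intro Q
      rw [Polynomial.aeval_eq_sum_range]
      exact Commute.sum_right _ _ _ fun i _ => ((hsgρ.pow_right i).smul_right _)
    have hρpowj : ∀ j : ℕ, (g * star g) ^ j = (star g) ^ j * g ^ j := by
      intro j
      rw [← hsgg]
      exact Commute.mul_pow hsgg j
    have hstep : ∀ (j : ℕ) (Q : Polynomial ℝ),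
        (star g) ^ j * Polynomial.aeval (g * star g) Q * g ^ j
          = Polynomial.aeval (g * star g) (Q * Polynomial.X ^ j) := by
      intro j Q
      rw [map_mul, map_pow, Polynomial.aeval_X, hρpowj j]
      rw [((hpoly Q).pow_left j).eq, mul_assoc]
    set M : Fin n → Fin n → ℝ := fun i j =>
      (auxP q (n - ((j : ℕ) + 1)) * Polynomial.X ^ ((j : ℕ) + 1)).coeff ((i : ℕ) + 1) with hM
    set b : Fin n → ℝ := fun i => -((auxP q n).coeff ((i : ℕ) + 1)) with hb
    have hdiag : ∀ i, M i i = 1 := by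
      intro i
      rw [hM]
      simp only
      rw [Polynomial.coeff_mul_X_pow', if_pos le_rfl, Nat.sub_self, auxP_coeff_zero]
    have hup : ∀ i j : Fin n, (i : ℕ) < (j : ℕ) → M i j = 0 := by
      intro i j hij
      rw [hM]
      simp only
      rw [Polynomial.coeff_mul_X_pow', if_neg (by omega)]
    have hΦcoeff : ∀ (r : Fin n → ℝ) (k : ℕ),
        (auxP q n + ∑ i : Fin n, Polynomial.C (r i) *
          (auxP q (n - ((i : ℕ) + 1)) * Polynomial.X ^ ((i : ℕ) + 1))).coeff k
        = (auxP q n).coeff k + ∑ j : Fin n,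
            r j * (auxP q (n - ((j : ℕ) + 1)) * Polynomial.X ^ ((j : ℕ) + 1)).coeff k := by
      intro r k
      rw [Polynomial.coeff_add, Polynomial.finset_sum_coeff]
      congr 1
      exact Finset.sum_congr rfl fun j _ => Polynomial.coeff_C_mul _
    have hLHS : ∀ r : Fin n → ℝ,
        (star a) ^ n * a ^ n
          + ∑ i : Fin n, r i •
              ((star g) ^ ((i : ℕ) + 1)
                * ((star a) ^ (n - ((i : ℕ) + 1)) * a ^ (n - ((i : ℕ) + 1)))
                * g ^ ((i : ℕ) + 1))
          = Polynomial.aeval (g * star g)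
              (auxP q n + ∑ i : Fin n, Polynomial.C (r i) *
                (auxP q (n - ((i : ℕ) + 1)) * Polynomial.X ^ ((i : ℕ) + 1))) := by
      intro r
      rw [map_add, map_sum, hval n]
      congr 1
      refine Finset.sum_congr rfl fun i _ => ?_
      rw [hval (n - ((i : ℕ) + 1)), hstep ((i : ℕ) + 1)]
      conv_rhs => rw [map_mul, Polynomial.aeval_C]
      rw [← Algebra.smul_def]
    have hiff : ∀ r : Fin n → ℝ,
        ((star a) ^ n * a ^ n
          + ∑ i : Fin n, r i •
              ((star g) ^ ((i : ℕ) + 1)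
                * ((star a) ^ (n - ((i : ℕ) + 1)) * a ^ (n - ((i : ℕ) + 1)))
                * g ^ ((i : ℕ) + 1)) = 1)
        ↔ (∀ i : Fin n, ∑ j, M i j * r j = b i) := by
      intro r
      rw [hLHS r]
      constructor
      · intro h i
        have hpoly1 : (auxP q n + ∑ i : Fin n, Polynomial.C (r i) *
            (auxP q (n - ((i : ℕ) + 1)) * Polynomial.X ^ ((i : ℕ) + 1))) = 1 := by
          apply hinj
          simpa using h
        have hc := Polynomial.ext_iff.mp hpoly1 ((i : ℕ) + 1)
        rw [hΦcoeff r, Polynomial.coeff_one, if_neg (by omega)] at hc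
        have hsum : ∑ j, M i j * r j = ∑ j : Fin n,
            r j * (auxP q (n - ((j : ℕ) + 1)) * Polynomial.X ^ ((j : ℕ) + 1)).coeff ((i : ℕ) + 1) :=
          Finset.sum_congr rfl fun j _ => mul_comm _ _
        rw [hsum]
        simp only [hb]
        linarith
      · intro hs
        have hpoly1 : (auxP q n + ∑ i : Fin n, Polynomial.C (r i) *
            (auxP q (n - ((i : ℕ) + 1)) * Polynomial.X ^ ((i : ℕ) + 1))) = 1 := by
          ext k
          rw [hΦcoeff r]
          match k with
          | 0 =>
            rw [auxP_coeff_zero, Polynomial.coeff_one, if_pos rfl]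
            have : ∀ j : Fin n,
                (auxP q (n - ((j : ℕ) + 1)) * Polynomial.X ^ ((j : ℕ) + 1)).coeff 0 = 0 := by
              intro j
              rw [Polynomial.coeff_mul_X_pow', if_neg (by omega)]
            rw [Finset.sum_congr rfl fun j _ => by rw [this j, mul_zero]]
            simp
          | (m + 1) =>
            rw [Polynomial.coeff_one, if_neg (by omega)]
            by_cases hm : m < n
            · have hs' := hs ⟨m, hm⟩
              have hsum : ∑ j, M ⟨m, hm⟩ j * r j = ∑ j : Fin n,
                  r j * (auxP q (n - ((j : ℕ) + 1)) * Polynomial.X ^ ((j : ℕ) + 1)).coeff (m + 1) :=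
                Finset.sum_congr rfl fun j _ => mul_comm _ _
              rw [hsum] at hs'
              simp only [hb] at hs'
              linarith
            · have hdeg1 : (auxP q n).coeff (m + 1) = 0 :=
                Polynomial.coeff_eq_zero_of_natDegree_lt
                  (lt_of_le_of_lt (auxP_natDegree_le q n) (by omega))
              have hdeg2 : ∀ j : Fin n,
                  (auxP q (n - ((j : ℕ) + 1)) * Polynomial.X ^ ((j : ℕ) + 1)).coeff (m + 1) = 0 := by
                intro j
                refine Polynomial.coeff_eq_zero_of_natDegree_lt (lt_of_le_of_lt
                  (le_trans (Polynomial.natDegree_mul_le)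
                    (add_le_add (auxP_natDegree_le q _) (le_of_eq (Polynomial.natDegree_X_pow _)))) ?_)
                · have := j.isLt
                  omega
              rw [hdeg1, Finset.sum_congr rfl fun j _ => by rw [hdeg2 j, mul_zero]]
              simp
        rw [hpoly1]
        simp
    exact (existsUnique_congr hiff).mpr (aux_tri_solve n M hdiag hup b)
end
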